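/- Assume each p_i takes values almost surely in the finite set A. Let α ∈ (0,1) and define the [A-DBH-SU] critical values by τ_m = max{t ∈ A : F_i(t) < 1 for all i, and (1/m)·Σ_{i=1}^m F_i(t)/(1−F_i(t)) ≤ α} and, for 1 ≤ k ≤ m−1, τ_k = max{t ∈ A : t ≤ τ_m and for every subset S ⊆ {1,…,m} with |S| = m−k+1, Σ_{i∈S} F_i(t)/(1−F_i(τ_m)) ≤ αk} (these sets contain 0, hence are nonempty, and the resulting sequence is nondecreasing). Then the false discovery rate of the step-up procedure SU(τ) satisfies FDR(SU(τ)) ≤ α. -/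

import Mathlib

open MeasureTheory ProbabilityTheory Finset

/-- Number of rejections of the step-up procedure with critical values `τ 1, …, τ m`
(convention `τ 0 = 0`): the largest `k ∈ {0, …, m}` such that at least `k` of the
p-values are `≤ τ k`. -/
noncomputable def numRejSU (m : ℕ) (τ : ℕ → ℝ) (q : Fin m → ℝ) : ℕ :=
  sSup {k | k ≤ m ∧ k ≤ (univ.filter (fun j => q j ≤ τ k)).card}

/-- Rejection set of the step-up procedure. -/
noncomputable def rejSU (m : ℕ) (τ : ℕ → ℝ) (q : Fin m → ℝ) : Finset (Fin m) :=
  univ.filter (fun i => q i ≤ τ (numRejSU m τ q))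

/-- False discovery proportion of a rejection set `R` w.r.t. the set of true nulls `H0`. -/
noncomputable def FDP (m : ℕ) (H0 R : Finset (Fin m)) : ℝ :=
  ((R ∩ H0).card : ℝ) / max (R.card : ℝ) 1

namespace ADBH

variable {m : ℕ} {τ : ℕ → ℝ}

/-- counts -/
noncomputable def cnt (m : ℕ) (τ : ℕ → ℝ) (q : Fin m → ℝ) (k : ℕ) : ℕ :=
  (univ.filter (fun j => q j ≤ τ k)).card

lemma cnt_le (q : Fin m → ℝ) (k : ℕ) : cnt m τ q k ≤ m := by
  classical
  have := Finset.card_filter_le (univ : Finset (Fin m)) (fun j => q j ≤ τ k)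
  simpa [cnt] using this

lemma cnt_mono (hτ : ∀ k l, k ≤ l → l ≤ m → τ k ≤ τ l) (q : Fin m → ℝ)
    {k l : ℕ} (hkl : k ≤ l) (hl : l ≤ m) : cnt m τ q k ≤ cnt m τ q l := by
  classical
  apply Finset.card_le_card
  intro j hj
  simp only [mem_filter, mem_univ, true_and] at hj ⊢
  exact hj.trans (hτ k l hkl hl)

lemma bdd (q : Fin m → ℝ) :
    BddAbove {k | k ≤ m ∧ k ≤ (univ.filter (fun j => q j ≤ τ k)).card} :=
  ⟨m, fun _ hx => hx.1⟩

lemma numRej_mem (q : Fin m → ℝ) :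
    numRejSU m τ q ≤ m ∧ numRejSU m τ q ≤ cnt m τ q (numRejSU m τ q) := by
  classical
  have h := Nat.sSup_mem (s := {k | k ≤ m ∧ k ≤ (univ.filter (fun j => q j ≤ τ k)).card})
    ⟨0, by simp⟩ (bdd q)
  exact h

lemma le_numRej (q : Fin m → ℝ) {k : ℕ} (hk : k ≤ m) (hc : k ≤ cnt m τ q k) :
    k ≤ numRejSU m τ q :=
  le_csSup (bdd q) ⟨hk, hc⟩

lemma numRej_le (q : Fin m → ℝ) : numRejSU m τ q ≤ m := (numRej_mem q).1

end ADBH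

namespace ADBH2
open ADBH

variable {m : ℕ} {τ : ℕ → ℝ}

lemma cnt_card_eq (q : Fin m → ℝ) (k : ℕ) :
    cnt m τ q k = ∑ j : Fin m, if q j ≤ τ k then 1 else 0 := by
  classical
  simpa [cnt] using Finset.card_filter (fun j => q j ≤ τ k) univ

lemma cnt_update_apply (q : Fin m → ℝ) (i : Fin m) (a : ℝ) (k : ℕ) :
    cnt m τ (Function.update q i a) k + (if q i ≤ τ k then 1 else 0)
      = cnt m τ q k + (if a ≤ τ k then 1 else 0) := by
  classical
  rw [cnt_card_eq, cnt_card_eq]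
  rw [← Finset.sum_erase_add (univ : Finset (Fin m)) _ (mem_univ i),
      ← Finset.sum_erase_add (univ : Finset (Fin m)) (fun j => if q j ≤ τ k then 1 else 0) (mem_univ i)]
  have he : ∑ j ∈ univ.erase i, (if Function.update q i a j ≤ τ k then 1 else 0)
      = ∑ j ∈ univ.erase i, (if q j ≤ τ k then 1 else 0) := by
    apply Finset.sum_congr rfl
    intro j hj
    rw [Function.update_of_ne (Finset.ne_of_mem_erase hj)]
  rw [he, Function.update_self]
  ring

lemma numRej_update_of_le (hm : 1 ≤ m) (hτ0 : τ 0 = 0)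
    (hτnn : ∀ k, k ≤ m → 0 ≤ τ k) (hmono : ∀ k l, k ≤ l → l ≤ m → τ k ≤ τ l)
    (q : Fin m → ℝ) (i : Fin m) (hq0 : 0 ≤ q i)
    (h : q i ≤ τ (numRejSU m τ q)) :
    numRejSU m τ (Function.update q i 0) = numRejSU m τ q ∧ 1 ≤ numRejSU m τ q := by
  classical
  have hK1 : 1 ≤ numRejSU m τ q := by
    by_contra hc
    have hK0 : numRejSU m τ q = 0 := by omega
    rw [hK0, hτ0] at h
    have hqi : q i = 0 := le_antisymm h hq0
    have h1 : (1 : ℕ) ≤ cnt m τ q 1 := by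
      have : i ∈ univ.filter (fun j => q j ≤ τ 1) := by
        simp [hqi, hτnn 1 hm]
      have := Finset.card_pos.mpr ⟨i, this⟩
      simpa [cnt] using this
    have := le_numRej (τ := τ) q hm h1
    omega
  have hle : numRejSU m τ q ≤ numRejSU m τ (Function.update q i 0) := by
    apply le_numRej _ (numRej_le q)
    have happ := cnt_update_apply (τ := τ) q i 0 (numRejSU m τ q)
    have h0 : (if (0:ℝ) ≤ τ (numRejSU m τ q) then 1 else 0) = 1 := by
      simp [hτnn _ (numRej_le (τ := τ) q)]
    have hmem := (numRej_mem (τ := τ) q).2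
    rw [h0] at happ
    have : cnt m τ q (numRejSU m τ q) ≤ cnt m τ (Function.update q i 0) (numRejSU m τ q) := by
      by_cases hc : q i ≤ τ (numRejSU m τ q) <;> simp [hc] at happ <;> omega
    omega
  have hge : numRejSU m τ (Function.update q i 0) ≤ numRejSU m τ q := by
    have hmem := (numRej_mem (τ := τ) (Function.update q i 0)).2
    have hlem := numRej_le (τ := τ) (Function.update q i 0)
    have hqi' : q i ≤ τ (numRejSU m τ (Function.update q i 0)) := h.trans (hmono _ _ hle hlem)
    have happ := cnt_update_apply (τ := τ) q i 0 (numRejSU m τ (Function.update q i 0))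
    rw [if_pos hqi', if_pos (hτnn _ hlem)] at happ
    exact le_numRej _ hlem (by omega)
  exact ⟨le_antisymm hge hle, hK1⟩

/-- common leave-one-out value when `p_i > τ m` -/
noncomputable def Kplus (m : ℕ) (τ : ℕ → ℝ) (q : Fin m → ℝ) : ℕ :=
  sSup {k | k ≤ m ∧ k ≤ cnt m τ q k + 1}

lemma Kplus_mem (q : Fin m → ℝ) :
    Kplus m τ q ≤ m ∧ Kplus m τ q ≤ cnt m τ q (Kplus m τ q) + 1 := by
  unfold Kplus
  exact Nat.sSup_mem (s := {k | k ≤ m ∧ k ≤ cnt m τ q k + 1})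
    ⟨0, ⟨Nat.zero_le m, by omega⟩⟩ ⟨m, fun x hx => hx.1⟩

lemma one_le_Kplus (hm : 1 ≤ m) (q : Fin m → ℝ) : 1 ≤ Kplus m τ q := by
  unfold Kplus
  have hmem : (1:ℕ) ∈ {k | k ≤ m ∧ k ≤ cnt m τ q k + 1} := ⟨hm, by omega⟩
  refine le_csSup ?_ hmem
  exact ⟨m, fun x hx => hx.1⟩

lemma numRej_update_of_gt (hτnn : ∀ k, k ≤ m → 0 ≤ τ k)
    (hmono : ∀ k l, k ≤ l → l ≤ m → τ k ≤ τ l)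
    (q : Fin m → ℝ) (i : Fin m) (h : τ m < q i) :
    numRejSU m τ (Function.update q i 0) = Kplus m τ q := by
  classical
  have hset : {k | k ≤ m ∧ k ≤ (univ.filter (fun j => Function.update q i 0 j ≤ τ k)).card}
      = {k | k ≤ m ∧ k ≤ cnt m τ q k + 1} := by
    ext k
    simp only [Set.mem_setOf_eq, and_congr_right_iff]
    intro hk
    have happ := cnt_update_apply (τ := τ) q i 0 k
    have hgt : ¬ q i ≤ τ k := not_le.mpr ((hmono k m hk le_rfl).trans_lt h)
    rw [if_neg hgt, if_pos (hτnn k hk)] at happ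
    have : cnt m τ (Function.update q i 0) k = cnt m τ q k + 1 := by omega
    rw [show (univ.filter (fun j => Function.update q i 0 j ≤ τ k)).card
        = cnt m τ (Function.update q i 0) k from rfl, this]
  rw [numRejSU, hset, Kplus]

lemma card_gt_le (hτnn : ∀ k, k ≤ m → 0 ≤ τ k)
    (hmono : ∀ k l, k ≤ l → l ≤ m → τ k ≤ τ l)
    (q : Fin m → ℝ) (H0 : Finset (Fin m)) :
    (H0.filter (fun i => τ m < q i)).card + Kplus m τ q ≤ m + 1 := by
  classical
  have h1 : (H0.filter (fun i => τ m < q i)).card ≤ (univ.filter (fun i => τ m < q i)).card := by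
    apply Finset.card_le_card
    intro i hi
    simp only [Finset.mem_filter, Finset.mem_univ, true_and] at hi ⊢
    exact hi.2
  have h2 : cnt m τ q m + (univ.filter (fun i => τ m < q i)).card = m := by
    have := Finset.card_filter_add_card_filter_not
      (s := (univ : Finset (Fin m))) (p := fun i => q i ≤ τ m)
    simp only [Finset.card_univ, Fintype.card_fin] at this
    have hiff : (univ.filter (fun i => τ m < q i)) = (univ.filter (fun i => ¬ q i ≤ τ m)) := by
      apply Finset.filter_congr; intro i _; simp [not_le]
    rw [hiff]
    simpa [cnt] using this
  have h3 := (Kplus_mem (τ := τ) q).2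
  have h4 := (Kplus_mem (τ := τ) q).1
  have h5 : cnt m τ q (Kplus m τ q) ≤ cnt m τ q m := cnt_mono hmono q h4 le_rfl
  omega

lemma cnt_numRej_self (hm : 1 ≤ m) (hτ0 : τ 0 = 0)
    (hτnn : ∀ k, k ≤ m → 0 ≤ τ k) (hmono : ∀ k l, k ≤ l → l ≤ m → τ k ≤ τ l)
    (q : Fin m → ℝ) (hq0 : ∀ j, 0 ≤ q j) :
    cnt m τ q (numRejSU m τ q) = numRejSU m τ q := by
  classical
  set K := numRejSU m τ q with hK
  have hmem := numRej_mem (τ := τ) q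
  rcases Nat.eq_zero_or_pos K with h0 | hpos
  · rw [h0]
    by_contra hc
    have : 0 < cnt m τ q 0 := by omega
    obtain ⟨i, hi⟩ := Finset.card_pos.mp this
    simp only [cnt, mem_filter, mem_univ, true_and, hτ0] at hi
    have hqi : q i = 0 := le_antisymm hi (hq0 i)
    have h1 : (1:ℕ) ≤ cnt m τ q 1 := by
      have : i ∈ univ.filter (fun j => q j ≤ τ 1) := by simp [hqi, hτnn 1 hm]
      simpa [cnt] using Finset.card_pos.mpr ⟨i, this⟩
    have := le_numRej (τ := τ) q hm h1
    omega
  · refine le_antisymm ?_ hmem.2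
    by_contra hc
    push_neg at hc
    rcases Nat.lt_or_ge K m with hlt | hge
    · have : K + 1 ≤ cnt m τ q (K + 1) :=
        le_trans (by omega) (cnt_mono hmono q (Nat.le_succ K) hlt)
      have := le_numRej (τ := τ) q hlt this
      omega
    · have := cnt_le (τ := τ) q K
      omega

lemma card_rejSU (hm : 1 ≤ m) (hτ0 : τ 0 = 0)
    (hτnn : ∀ k, k ≤ m → 0 ≤ τ k) (hmono : ∀ k l, k ≤ l → l ≤ m → τ k ≤ τ l)
    (q : Fin m → ℝ) (hq0 : ∀ j, 0 ≤ q j) :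
    (univ.filter (fun i => q i ≤ τ (numRejSU m τ q))).card = numRejSU m τ q :=
  cnt_numRej_self hm hτ0 hτnn hmono q hq0

end ADBH2

namespace ADBH3
open ADBH ADBH2

variable {m : ℕ} {τ : ℕ → ℝ}

lemma stepA (hm : 1 ≤ m) (hτ0 : τ 0 = 0)
    (hτnn : ∀ k, k ≤ m → 0 ≤ τ k) (hmono : ∀ k l, k ≤ l → l ≤ m → τ k ≤ τ l)
    (q : Fin m → ℝ) (hq0 : ∀ j, 0 ≤ q j) (H0 : Finset (Fin m)) :
    FDP m H0 (rejSU m τ q) ≤ ∑ i ∈ H0,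
      (if q i ≤ τ (numRejSU m τ (Function.update q i 0))
        then ((numRejSU m τ (Function.update q i 0) : ℝ))⁻¹ else 0) := by
  classical
  have hcard : ((rejSU m τ q).card : ℝ) = (numRejSU m τ q : ℝ) := by
    rw [show (rejSU m τ q).card = numRejSU m τ q from
      card_rejSU hm hτ0 hτnn hmono q hq0]
  have hRH : rejSU m τ q ∩ H0 = H0.filter (fun i => q i ≤ τ (numRejSU m τ q)) := by
    ext i
    simp only [rejSU, Finset.mem_inter, Finset.mem_filter, Finset.mem_univ, true_and]
    tauto
  rw [FDP, hcard, hRH]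
  have hc2 : ((H0.filter (fun i => q i ≤ τ (numRejSU m τ q))).card : ℝ)
      = ∑ i ∈ H0, (if q i ≤ τ (numRejSU m τ q) then (1:ℝ) else 0) := by
    rw [Finset.card_filter]
    push_cast
    exact Finset.sum_congr rfl (fun i _ => by split <;> simp)
  rw [hc2, Finset.sum_div]
  apply Finset.sum_le_sum
  intro i hi
  by_cases hc : q i ≤ τ (numRejSU m τ q)
  · obtain ⟨heq, h1⟩ := numRej_update_of_le hm hτ0 hτnn hmono q i (hq0 i) hc
    rw [heq, if_pos hc, if_pos hc]
    have hmax : max ((numRejSU m τ q : ℝ)) 1 = (numRejSU m τ q : ℝ) := by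
      apply max_eq_left
      exact_mod_cast h1
    rw [hmax, one_div]
  · rw [if_neg hc, zero_div]
    split
    · positivity
    · exact le_refl 0

lemma stepC (hm : 1 ≤ m)
    (hτnn : ∀ k, k ≤ m → 0 ≤ τ k) (hmono : ∀ k l, k ≤ l → l ≤ m → τ k ≤ τ l)
    (F : Fin m → ℝ → ℝ) (α : ℝ)
    (hkey : ∀ k, 1 ≤ k → k ≤ m → ∀ N : Finset (Fin m), N.card + k ≤ m + 1 →
      ∑ i ∈ N, F i (τ k) / (1 - F i (τ m)) ≤ α * k)
    (q : Fin m → ℝ) (H0 : Finset (Fin m)) :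
    ∑ i ∈ H0, (if τ m < q i
      then (F i (τ (numRejSU m τ (Function.update q i 0))) / (1 - F i (τ m)))
        * ((numRejSU m τ (Function.update q i 0) : ℝ))⁻¹ else 0) ≤ α := by
  classical
  set K' := Kplus m τ q with hK'
  have hK'1 : 1 ≤ K' := one_le_Kplus hm q
  have hK'm : K' ≤ m := (Kplus_mem (τ := τ) q).1
  set N := H0.filter (fun i => τ m < q i) with hN
  have h1 : ∑ i ∈ H0, (if τ m < q i
      then (F i (τ (numRejSU m τ (Function.update q i 0))) / (1 - F i (τ m)))
        * ((numRejSU m τ (Function.update q i 0) : ℝ))⁻¹ else 0)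
      = ∑ i ∈ N, (F i (τ K') / (1 - F i (τ m))) * (K' : ℝ)⁻¹ := by
    rw [hN, Finset.sum_filter]
    apply Finset.sum_congr rfl
    intro i _
    by_cases hc : τ m < q i
    · rw [if_pos hc, if_pos hc, numRej_update_of_gt hτnn hmono q i hc]
    · rw [if_neg hc, if_neg hc]
  rw [h1, ← Finset.sum_mul]
  have hcd : N.card + K' ≤ m + 1 := card_gt_le hτnn hmono q H0
  have hsum := hkey K' hK'1 hK'm N hcd
  have hKpos : (0:ℝ) < (K' : ℝ) := by exact_mod_cast hK'1
  calc (∑ i ∈ N, F i (τ K') / (1 - F i (τ m))) * (K' : ℝ)⁻¹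
      ≤ (α * K') * (K' : ℝ)⁻¹ :=
        mul_le_mul_of_nonneg_right hsum (inv_nonneg.mpr hKpos.le)
    _ = α := by field_simp

end ADBH3

namespace ADBH4
open ADBH ADBH2 MeasureTheory ProbabilityTheory

variable {m : ℕ} {τ : ℕ → ℝ}

lemma one_le_numRej_update (hm : 1 ≤ m) (hτnn : ∀ k, k ≤ m → 0 ≤ τ k)
    (q : Fin m → ℝ) (i : Fin m) : 1 ≤ numRejSU m τ (Function.update q i 0) := by
  classical
  apply le_numRej _ hm
  have hmem : i ∈ univ.filter (fun j => Function.update q i 0 j ≤ τ 1) := by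
    simp [Function.update_self, hτnn 1 hm]
  simpa [cnt] using Finset.card_pos.mpr ⟨i, hmem⟩

lemma cnt_measurable (k : ℕ) : Measurable (fun q : Fin m → ℝ => cnt m τ q k) := by
  classical
  have h : (fun q : Fin m → ℝ => cnt m τ q k)
      = fun q => ∑ j : Fin m, if q j ≤ τ k then 1 else 0 :=
    funext fun q => cnt_card_eq q k
  rw [h]
  apply Finset.measurable_sum
  intro j _
  exact Measurable.ite (measurableSet_le (measurable_pi_apply j) measurable_const)
    measurable_const measurable_const

lemma numRej_measurable : Measurable (numRejSU m τ : (Fin m → ℝ) → ℕ) := by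
  classical
  apply measurable_to_countable'
  intro k
  by_cases hkm : k ≤ m
  · have hset : (numRejSU m τ : (Fin m → ℝ) → ℕ) ⁻¹' {k}
        = {q : Fin m → ℝ | k ≤ cnt m τ q k} ∩
          ⋂ l ∈ Finset.Icc (k+1) m, {q : Fin m → ℝ | cnt m τ q l < l} := by
      ext q
      simp only [Set.mem_preimage, Set.mem_singleton_iff, Set.mem_inter_iff,
        Set.mem_setOf_eq, Set.mem_iInter, Finset.mem_Icc]
      constructor
      · rintro rfl
        refine ⟨(numRej_mem q).2, ?_⟩
        intro l hl
        by_contra hc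
        push_neg at hc
        have := le_numRej (τ := τ) q hl.2 hc
        omega
      · rintro ⟨hkc, hl⟩
        have h1 : k ≤ numRejSU m τ q := le_numRej q hkm hkc
        have h2 := numRej_mem (τ := τ) q
        by_contra hne
        have hlt : k < numRejSU m τ q := lt_of_le_of_ne h1 (fun h => hne h.symm)
        have := hl (numRejSU m τ q) ⟨hlt, h2.1⟩
        omega
    rw [hset]
    refine MeasurableSet.inter ?_ ?_
    · exact cnt_measurable k (MeasurableSet.of_discrete (s := Set.Ici k))
    · refine MeasurableSet.biInter (Finset.countable_toSet _) (fun l _ => ?_)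
      exact cnt_measurable l (MeasurableSet.of_discrete (s := Set.Iio l))
  · have hset : (numRejSU m τ : (Fin m → ℝ) → ℕ) ⁻¹' {k} = ∅ := by
      ext q
      simp only [Set.mem_preimage, Set.mem_singleton_iff, Set.mem_empty_iff_false,
        iff_false]
      intro h
      have := numRej_le (τ := τ) q
      omega
    rw [hset]
    exact MeasurableSet.empty

end ADBH4

namespace ADBH5
open ADBH ADBH2 ADBH4 MeasureTheory ProbabilityTheory

variable {Ω : Type*} [MeasurableSpace Ω] {m : ℕ} (τ : ℕ → ℝ) (p : Fin m → Ω → ℝ)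

/-- leave-one-out step-up index -/
noncomputable def kap (i : Fin m) (ω : Ω) : ℕ :=
  numRejSU m τ (Function.update (fun j => p j ω) i 0)

noncomputable def phi (i : Fin m) (ω : Ω) : ℝ :=
  ∑ k ∈ Finset.Icc 1 m,
    ((kap τ p i ⁻¹' {k}) ∩ (p i ⁻¹' Set.Iic (τ k))).indicator (fun _ => ((k:ℝ))⁻¹) ω

noncomputable def psi (F : Fin m → ℝ → ℝ) (i : Fin m) (ω : Ω) : ℝ :=
  ∑ k ∈ Finset.Icc 1 m,
    ((kap τ p i ⁻¹' {k}) ∩ (p i ⁻¹' Set.Ioi (τ m))).indicator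
      (fun _ => (F i (τ k) / (1 - F i (τ m))) * ((k:ℝ))⁻¹) ω

lemma kap_measurable (hmeas : ∀ i, Measurable (p i)) (i : Fin m) :
    Measurable (kap τ p i) := by
  apply numRej_measurable.comp
  apply measurable_pi_lambda
  intro j
  by_cases h : j = i
  · subst h
    simp only [Function.update_self]
    exact measurable_const
  · simp only [Function.update_of_ne h]
    exact hmeas j

lemma kap_mem (hm : 1 ≤ m) (hτnn : ∀ k, k ≤ m → 0 ≤ τ k) (i : Fin m) (ω : Ω) :
    kap τ p i ω ∈ Finset.Icc 1 m :=
  Finset.mem_Icc.mpr ⟨one_le_numRej_update hm hτnn _ i, numRej_le _⟩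

lemma kap_indep {P : MeasureTheory.Measure Ω} [MeasureTheory.IsProbabilityMeasure P]
    (hindep : iIndepFun p P)
    (hmeas : ∀ i, Measurable (p i)) (i : Fin m) :
    IndepFun (p i) (kap τ p i) P := by
  classical
  have hdisj : Disjoint ({i} : Finset (Fin m)) ({i}ᶜ : Finset (Fin m)) :=
    disjoint_compl_right
  have hIF := hindep.indepFun_finset {i} {i}ᶜ hdisj hmeas
  have hφ : Measurable (fun x : ({i} : Finset (Fin m)) → ℝ =>
      x ⟨i, Finset.mem_singleton_self i⟩) := measurable_pi_apply _
  have hGmeas : Measurable (fun x : ((({i}ᶜ : Finset (Fin m)) : Finset (Fin m)) → ℝ) =>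
      numRejSU m τ (fun j => if h : j = i then 0 else
        x ⟨j, by simp [Finset.mem_compl, h]⟩)) := by
    apply numRej_measurable.comp
    apply measurable_pi_lambda
    intro j
    by_cases h : j = i
    · simp only [h, dif_pos]
      exact measurable_const
    · simp only [dif_neg h]
      exact measurable_pi_apply _
  have hcomp := hIF.comp hφ hGmeas
  have heq1 : ((fun x : ({i} : Finset (Fin m)) → ℝ => x ⟨i, Finset.mem_singleton_self i⟩)
      ∘ (fun a (j : ({i} : Finset (Fin m))) => p j a)) = p i := rfl
  have heq2 : ((fun x : ((({i}ᶜ : Finset (Fin m)) : Finset (Fin m)) → ℝ) =>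
        numRejSU m τ (fun j => if h : j = i then 0 else
          x ⟨j, by simp [Finset.mem_compl, h]⟩))
      ∘ (fun a (j : (({i}ᶜ : Finset (Fin m)) : Finset (Fin m))) => p j a)) = kap τ p i := by
    funext ω
    simp only [Function.comp_apply, kap]
    congr 1
    funext j
    by_cases h : j = i
    · subst h
      simp
    · simp [h]
  rw [heq1, heq2] at hcomp
  exact hcomp

lemma phi_eq (hm : 1 ≤ m) (hτnn : ∀ k, k ≤ m → 0 ≤ τ k) (i : Fin m) (ω : Ω) :
    phi τ p i ω = if p i ω ≤ τ (kap τ p i ω) then ((kap τ p i ω : ℝ))⁻¹ else 0 := by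
  classical
  rw [phi, Finset.sum_eq_single_of_mem (kap τ p i ω) (kap_mem τ p hm hτnn i ω)]
  · rw [Set.indicator_apply]
    by_cases h : p i ω ≤ τ (kap τ p i ω)
    · rw [if_pos ⟨rfl, h⟩, if_pos h]
    · rw [if_neg (fun hc => h hc.2), if_neg h]
  · intro b _ hb
    apply Set.indicator_of_notMem
    rintro ⟨hB, -⟩
    exact hb (Set.mem_singleton_iff.mp hB).symm

lemma psi_eq (hm : 1 ≤ m) (hτnn : ∀ k, k ≤ m → 0 ≤ τ k) (F : Fin m → ℝ → ℝ)
    (i : Fin m) (ω : Ω) :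
    psi τ p F i ω = if τ m < p i ω
      then (F i (τ (kap τ p i ω)) / (1 - F i (τ m))) * ((kap τ p i ω : ℝ))⁻¹ else 0 := by
  classical
  rw [psi, Finset.sum_eq_single_of_mem (kap τ p i ω) (kap_mem τ p hm hτnn i ω)]
  · rw [Set.indicator_apply]
    by_cases h : τ m < p i ω
    · rw [if_pos ⟨rfl, h⟩, if_pos h]
    · rw [if_neg (fun hc => h hc.2), if_neg h]
  · intro b _ hb
    apply Set.indicator_of_notMem
    rintro ⟨hB, -⟩
    exact hb (Set.mem_singleton_iff.mp hB).symm

lemma phi_integrable {P : MeasureTheory.Measure Ω} [MeasureTheory.IsProbabilityMeasure P]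
    (hmeas : ∀ i, Measurable (p i)) (i : Fin m) :
    MeasureTheory.Integrable (phi τ p i) P := by
  apply MeasureTheory.integrable_finset_sum
  intro k _
  exact (MeasureTheory.integrable_const _).indicator
    ((kap_measurable τ p hmeas i MeasurableSet.of_discrete).inter
      (hmeas i measurableSet_Iic))

lemma psi_integrable {P : MeasureTheory.Measure Ω} [MeasureTheory.IsProbabilityMeasure P]
    (hmeas : ∀ i, Measurable (p i)) (F : Fin m → ℝ → ℝ) (i : Fin m) :
    MeasureTheory.Integrable (psi τ p F i) P := by
  apply MeasureTheory.integrable_finset_sum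
  intro k _
  exact (MeasureTheory.integrable_const _).indicator
    ((kap_measurable τ p hmeas i MeasurableSet.of_discrete).inter
      (hmeas i measurableSet_Ioi))

lemma phi_integral {P : MeasureTheory.Measure Ω} [MeasureTheory.IsProbabilityMeasure P]
    (hmeas : ∀ i, Measurable (p i)) (i : Fin m) :
    ∫ ω, phi τ p i ω ∂P = ∑ k ∈ Finset.Icc 1 m,
      (P ((kap τ p i ⁻¹' {k}) ∩ (p i ⁻¹' Set.Iic (τ k)))).toReal * ((k:ℝ))⁻¹ := by
  unfold phi
  have hms : ∀ k : ℕ, MeasurableSet ((kap τ p i ⁻¹' {k}) ∩ (p i ⁻¹' Set.Iic (τ k))) :=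
    fun k => ((kap_measurable τ p hmeas i) MeasurableSet.of_discrete).inter
      (hmeas i measurableSet_Iic)
  rw [MeasureTheory.integral_finset_sum _
    (fun (k : ℕ) _ => (MeasureTheory.integrable_const ((k:ℝ))⁻¹).indicator (hms k))]
  apply Finset.sum_congr rfl
  intro k _
  rw [MeasureTheory.integral_indicator_const _ (hms k), smul_eq_mul]
  rfl

lemma psi_integral {P : MeasureTheory.Measure Ω} [MeasureTheory.IsProbabilityMeasure P]
    (hmeas : ∀ i, Measurable (p i)) (F : Fin m → ℝ → ℝ) (i : Fin m) :
    ∫ ω, psi τ p F i ω ∂P = ∑ k ∈ Finset.Icc 1 m,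
      (P ((kap τ p i ⁻¹' {k}) ∩ (p i ⁻¹' Set.Ioi (τ m)))).toReal
        * ((F i (τ k) / (1 - F i (τ m))) * ((k:ℝ))⁻¹) := by
  unfold psi
  have hms : ∀ k : ℕ, MeasurableSet ((kap τ p i ⁻¹' {k}) ∩ (p i ⁻¹' Set.Ioi (τ m))) :=
    fun k => ((kap_measurable τ p hmeas i) MeasurableSet.of_discrete).inter
      (hmeas i measurableSet_Ioi)
  rw [MeasureTheory.integral_finset_sum _
    (fun (k : ℕ) _ => (MeasureTheory.integrable_const _).indicator (hms k))]
  apply Finset.sum_congr rfl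
  intro k _
  rw [MeasureTheory.integral_indicator_const _ (hms k), smul_eq_mul]
  rfl

end ADBH5


/-- the adaptive [A-DBH-SU] procedure controls the FDR at level `α`. -/
theorem fdr_A_DBH_SU_le_alpha
    {Ω : Type*} [MeasurableSpace Ω] (P : Measure Ω) [IsProbabilityMeasure P]
    (m : ℕ) (hm : 1 ≤ m)
    (p : Fin m → Ω → ℝ) (hmeas : ∀ i, Measurable (p i))
    (hp01 : ∀ i ω, p i ω ∈ Set.Icc (0 : ℝ) 1)
    (hindep : iIndepFun p P)
    (H0 : Finset (Fin m))
    (F : Fin m → ℝ → ℝ)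
    (hFmono : ∀ i, MonotoneOn (F i) (Set.Icc 0 1))
    (hFrange : ∀ i, ∀ t ∈ Set.Icc (0 : ℝ) 1, F i t ∈ Set.Icc (0 : ℝ) 1)
    (hF0 : ∀ i, F i 0 = 0) (hF1 : ∀ i, F i 1 = 1)
    (hnull : ∀ i ∈ H0, ∀ t ∈ Set.Icc (0 : ℝ) 1,
      P {ω | p i ω ≤ t} ≤ ENNReal.ofReal (F i t))
    (A : Finset ℝ) (hA0 : (0 : ℝ) ∈ A) (hA : ∀ t ∈ A, t ∈ Set.Icc (0 : ℝ) 1)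
    (hpA : ∀ i, ∀ᵐ ω ∂P, p i ω ∈ A)
    (α : ℝ) (hα : α ∈ Set.Ioo (0 : ℝ) 1)
    (τ : ℕ → ℝ) (hτ0 : τ 0 = 0)
    (hτm : IsGreatest {t : ℝ | t ∈ A ∧ (∀ i, F i t < 1) ∧
      (1 / (m : ℝ)) * ∑ i : Fin m, F i t / (1 - F i t) ≤ α} (τ m))
    (hτk : ∀ k, 1 ≤ k → k < m → IsGreatest {t : ℝ | t ∈ A ∧ t ≤ τ m ∧
      ∀ S : Finset (Fin m), S.card = m - k + 1 →
        ∑ i ∈ S, F i t / (1 - F i (τ m)) ≤ α * k} (τ k))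
    :
    ∫ ω, FDP m H0 (rejSU m τ (fun j => p j ω)) ∂P ≤ α := by
  classical
  -- basic facts about τ and F
  have hmR : (0:ℝ) < m := by exact_mod_cast hm
  have hτIcc : ∀ k, 1 ≤ k → k ≤ m → τ k ∈ Set.Icc (0:ℝ) 1 := by
    intro k hk1 hkm
    rcases eq_or_lt_of_le hkm with h | h
    · rw [h]; exact hA _ hτm.1.1
    · exact hA _ (hτk k hk1 h).1.1
  have hτnn : ∀ k, k ≤ m → 0 ≤ τ k := by
    intro k hk
    rcases Nat.eq_zero_or_pos k with h | h
    · rw [h, hτ0]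
    · exact (hτIcc k h hk).1
  have hden : ∀ i, 0 < 1 - F i (τ m) := by
    intro i; have := hτm.1.2.1 i; linarith
  have hFnn : ∀ i k, 1 ≤ k → k ≤ m → 0 ≤ F i (τ k) :=
    fun i k h1 h2 => (hFrange i _ (hτIcc k h1 h2)).1
  have hgnn : ∀ i k, 1 ≤ k → k ≤ m → 0 ≤ F i (τ k) / (1 - F i (τ m)) :=
    fun i k h1 h2 => div_nonneg (hFnn i k h1 h2) (hden i).le
  -- key inequality
  have hkey : ∀ k, 1 ≤ k → k ≤ m → ∀ N : Finset (Fin m), N.card + k ≤ m + 1 →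
      ∑ i ∈ N, F i (τ k) / (1 - F i (τ m)) ≤ α * k := by
    intro k hk1 hkm N hN
    rcases eq_or_lt_of_le hkm with heq | hlt
    · have hsub : ∑ i ∈ N, F i (τ k) / (1 - F i (τ m))
          ≤ ∑ i : Fin m, F i (τ k) / (1 - F i (τ m)) :=
        Finset.sum_le_sum_of_subset_of_nonneg (Finset.subset_univ N)
          (fun i _ _ => hgnn i k hk1 hkm)
      have hSm : ∑ i : Fin m, F i (τ m) / (1 - F i (τ m)) ≤ α * m := by
        have h := hτm.1.2.2
        have h2 := mul_le_mul_of_nonneg_left h hmR.le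
        rw [← mul_assoc] at h2
        rw [mul_one_div, div_self hmR.ne', one_mul] at h2
        linarith
      rw [heq]
      rw [heq] at hsub
      calc ∑ i ∈ N, F i (τ m) / (1 - F i (τ m))
          ≤ ∑ i : Fin m, F i (τ m) / (1 - F i (τ m)) := hsub
        _ ≤ α * m := hSm
    · obtain ⟨S, hNS, hScard⟩ := Finset.exists_superset_card_eq
        (n := m - k + 1) (s := N) (by omega)
        (by rw [Fintype.card_fin]; omega)
      calc ∑ i ∈ N, F i (τ k) / (1 - F i (τ m))
          ≤ ∑ i ∈ S, F i (τ k) / (1 - F i (τ m)) :=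
            Finset.sum_le_sum_of_subset_of_nonneg hNS (fun i _ _ => hgnn i k hk1 hkm)
        _ ≤ α * k := (hτk k hk1 hlt).1.2.2 S hScard
  -- monotonicity of τ
  have hmono : ∀ k l, k ≤ l → l ≤ m → τ k ≤ τ l := by
    intro k l hkl hlm
    rcases Nat.eq_zero_or_pos k with hk0 | hk1
    · rcases Nat.eq_zero_or_pos l with hl0 | hl1
      · rw [hk0, hl0]
      · rw [hk0, hτ0]; exact (hτIcc l hl1 hlm).1
    · have hl1 : 1 ≤ l := le_trans hk1 hkl
      rcases eq_or_lt_of_le hlm with hleq | hllt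
      · rcases eq_or_lt_of_le hkl with hkeq | hklt
        · rw [hkeq, hleq]
        · rw [hleq]
          exact (hτk k hk1 (by omega)).1.2.1
      · have hklt : k < m := lt_of_le_of_lt hkl hllt
        apply (hτk l hl1 hllt).2
        refine ⟨(hτk k hk1 hklt).1.1, (hτk k hk1 hklt).1.2.1, ?_⟩
        intro S hS
        have h1 : ∑ i ∈ S, F i (τ k) / (1 - F i (τ m)) ≤ α * k :=
          hkey k hk1 hklt.le S (by omega)
        have h2 : α * (k:ℝ) ≤ α * (l:ℝ) := by
          apply mul_le_mul_of_nonneg_left _ hα.1.le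
          exact_mod_cast hkl
        linarith
  -- pointwise bounds and integration
  have hφpt : ∀ ω, FDP m H0 (rejSU m τ (fun j => p j ω)) ≤ ∑ i ∈ H0, ADBH5.phi τ p i ω := by
    intro ω
    refine (ADBH3.stepA hm hτ0 hτnn hmono (fun j => p j ω)
      (fun j => (hp01 j ω).1) H0).trans (le_of_eq ?_)
    refine Finset.sum_congr rfl (fun i _ => ?_)
    exact (ADBH5.phi_eq τ p hm hτnn i ω).symm
  have hFDPnn : ∀ ω, 0 ≤ FDP m H0 (rejSU m τ (fun j => p j ω)) := by
    intro ω
    apply div_nonneg (Nat.cast_nonneg _)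
    exact le_trans zero_le_one (le_max_right _ 1)
  have hψpt : ∀ ω, ∑ i ∈ H0, ADBH5.psi τ p F i ω ≤ α := by
    intro ω
    refine le_trans (le_of_eq ?_) (ADBH3.stepC hm hτnn hmono F α hkey (fun j => p j ω) H0)
    refine Finset.sum_congr rfl (fun i _ => ?_)
    exact ADBH5.psi_eq τ p hm hτnn F i ω
  have hφInt : ∀ i, Integrable (ADBH5.phi τ p i) P := ADBH5.phi_integrable τ p hmeas
  have hψInt : ∀ i, Integrable (ADBH5.psi τ p F i) P := ADBH5.psi_integrable τ p hmeas F
  -- step B : per-hypothesis integral comparison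
  have hstepB : ∀ i ∈ H0, ∫ ω, ADBH5.phi τ p i ω ∂P ≤ ∫ ω, ADBH5.psi τ p F i ω ∂P := by
    intro i hi
    rw [ADBH5.phi_integral τ p hmeas i, ADBH5.psi_integral τ p hmeas F i]
    apply Finset.sum_le_sum
    intro k hk
    obtain ⟨hk1, hkm⟩ := Finset.mem_Icc.mp hk
    have hindepK := ADBH5.kap_indep τ p hindep hmeas i
    have hBC : P ((ADBH5.kap τ p i ⁻¹' {k}) ∩ (p i ⁻¹' Set.Iic (τ k)))
        = P (p i ⁻¹' Set.Iic (τ k)) * P (ADBH5.kap τ p i ⁻¹' {k}) := by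
      rw [Set.inter_comm]
      exact hindepK.measure_inter_preimage_eq_mul _ _ measurableSet_Iic
        MeasurableSet.of_discrete
    have hBD : P ((ADBH5.kap τ p i ⁻¹' {k}) ∩ (p i ⁻¹' Set.Ioi (τ m)))
        = P (p i ⁻¹' Set.Ioi (τ m)) * P (ADBH5.kap τ p i ⁻¹' {k}) := by
      rw [Set.inter_comm]
      exact hindepK.measure_inter_preimage_eq_mul _ _ measurableSet_Ioi
        MeasurableSet.of_discrete
    rw [hBC, hBD, ENNReal.toReal_mul, ENNReal.toReal_mul]
    have haCle : (P (p i ⁻¹' Set.Iic (τ k))).toReal ≤ F i (τ k) := by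
      apply ENNReal.toReal_le_of_le_ofReal (hFnn i k hk1 hkm)
      exact hnull i hi (τ k) (hτIcc k hk1 hkm)
    have haCmle : (P (p i ⁻¹' Set.Iic (τ m))).toReal ≤ F i (τ m) := by
      apply ENNReal.toReal_le_of_le_ofReal (hFnn i m hm le_rfl)
      exact hnull i hi (τ m) (hτIcc m hm le_rfl)
    have haD : 1 - F i (τ m) ≤ (P (p i ⁻¹' Set.Ioi (τ m))).toReal := by
      have hcompl : p i ⁻¹' Set.Ioi (τ m) = (p i ⁻¹' Set.Iic (τ m))ᶜ := by
        ext ω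
        simp [not_le]
      rw [hcompl, prob_compl_eq_one_sub (hmeas i measurableSet_Iic),
        ENNReal.toReal_sub_of_le prob_le_one ENNReal.one_ne_top, ENNReal.toReal_one]
      linarith
    set aB := (P (ADBH5.kap τ p i ⁻¹' {k})).toReal with haB
    set aC := (P (p i ⁻¹' Set.Iic (τ k))).toReal with haC
    set aD := (P (p i ⁻¹' Set.Ioi (τ m))).toReal with haDd
    have haBnn : 0 ≤ aB := ENNReal.toReal_nonneg
    have hkinv : (0:ℝ) ≤ ((k:ℝ))⁻¹ := by positivity
    have h1 : F i (τ k) ≤ aD * (F i (τ k) / (1 - F i (τ m))) := by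
      have h2 := mul_le_mul_of_nonneg_right haD (hgnn i k hk1 hkm)
      have h3 : (1 - F i (τ m)) * (F i (τ k) / (1 - F i (τ m))) = F i (τ k) := by
        rw [mul_comm, div_mul_cancel₀ _ (hden i).ne']
      linarith
    have hCle : aC ≤ aD * (F i (τ k) / (1 - F i (τ m))) := haCle.trans h1
    calc aC * aB * ((k:ℝ))⁻¹
        ≤ (aD * (F i (τ k) / (1 - F i (τ m)))) * aB * ((k:ℝ))⁻¹ := by
          apply mul_le_mul_of_nonneg_right (mul_le_mul_of_nonneg_right hCle haBnn) hkinv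
      _ = aD * aB * (F i (τ k) / (1 - F i (τ m)) * ((k:ℝ))⁻¹) := by ring
  -- assembling
  calc ∫ ω, FDP m H0 (rejSU m τ (fun j => p j ω)) ∂P
      ≤ ∫ ω, ∑ i ∈ H0, ADBH5.phi τ p i ω ∂P :=
        integral_mono_of_nonneg (Filter.Eventually.of_forall hFDPnn)
          (integrable_finset_sum _ (fun i _ => hφInt i))
          (Filter.Eventually.of_forall hφpt)
    _ = ∑ i ∈ H0, ∫ ω, ADBH5.phi τ p i ω ∂P :=
        integral_finset_sum _ (fun i _ => hφInt i)
    _ ≤ ∑ i ∈ H0, ∫ ω, ADBH5.psi τ p F i ω ∂P := Finset.sum_le_sum hstepB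
    _ = ∫ ω, ∑ i ∈ H0, ADBH5.psi τ p F i ω ∂P :=
        (integral_finset_sum _ (fun i _ => hψInt i)).symm
    _ ≤ ∫ _ω, α ∂P :=
        integral_mono (integrable_finset_sum _ (fun i _ => hψInt i))
          (integrable_const α) hψpt
    _ = α := by simp
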